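/- Let R be a commutative ℚ-algebra with a derivation D and distinguished elements e₂, e₄ satisfying D(e₂) = (e₂² - e₄)/12. Define for a ∈ R and integer k: ∂_k(a) = D(a) - (k/12)e₂a, and recursively ∂_k^{[0]}a = a, ∂_k^{[1]}a = ∂_k a, ∂_k^{[n+1]}a = ∂_{k+2n}(∂_k^{[n]}a) - (n(n+k-1)/144)·e₄·∂_k^{[n-1]}a. Then the generating-series identity Σ_{n≥0} ∂_k^{[n]}(a)·X^n/(n!(k)_n) = exp(-X e₂/12)·Σ_{n≥0} D^n(a)·X^n/(n!(k)_n) holds in R[[X]] whenever k is a positive integer (so (k)_n ≠ 0). -/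

import Mathlib

open Finset

noncomputable section

/-- Rising factorial `k (k+1) ⋯ (k+n-1)` in `ℚ`. -/
def risingQ (k : ℕ) (n : ℕ) : ℚ := ∏ i ∈ Finset.range n, ((k : ℚ) + i)

/-- The abstract canonical higher Serre derivatives in a commutative `ℚ`-algebra `R` with a
derivation `D` and distinguished elements `e₂, e₄`:
`∂_k^{[0]}a = a`, `∂_k^{[1]}a = D a - (k/12)e₂a`,
`∂_k^{[n+2]}a = ∂_{k+2(n+1)}(∂_k^{[n+1]}a) - ((n+1)(n+k)/144)·e₄·∂_k^{[n]}a`. -/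
def higherSerreA {R : Type*} [CommRing R] [Algebra ℚ R]
    (D : R → R) (e2 e4 : R) (k : ℚ) (a : R) : ℕ → R
  | 0 => a
  | 1 => D a - (k / 12) • (e2 * a)
  | (n + 2) =>
      (D (higherSerreA D e2 e4 k a (n + 1)) -
          ((k + 2 * ((n : ℚ) + 1)) / 12) • (e2 * higherSerreA D e2 e4 k a (n + 1))) -
        ((((n : ℚ) + 1) * (((n : ℚ) + 1) + k - 1) / 144) : ℚ) •
          (e4 * higherSerreA D e2 e4 k a n)

/-! ### Auxiliary scalar lemmas -/

lemma risingQ_zero (k : ℕ) : risingQ k 0 = 1 := by simp [risingQ]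

lemma risingQ_succ (k n : ℕ) : risingQ k (n + 1) = risingQ k n * ((k : ℚ) + n) :=
  Finset.prod_range_succ _ _

lemma risingQ_pos (k n : ℕ) (hk : 0 < k) : 0 < risingQ k n := by
  apply Finset.prod_pos
  intro i _
  have : (1 : ℚ) ≤ (k : ℚ) := by exact_mod_cast hk
  positivity

lemma risingQ_ne_zero (k n : ℕ) (hk : 0 < k) : risingQ k n ≠ 0 :=
  (risingQ_pos k n hk).ne'

lemma factQ_ne_zero (n : ℕ) : ((n.factorial : ℚ)) ≠ 0 :=
  Nat.cast_ne_zero.2 n.factorial_ne_zero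

/-- combinatorial weight `(i+j)! (k)_{i+j} / (i! j! (k)_j)`. -/
def wQ (k i j : ℕ) : ℚ :=
  (((i + j).factorial : ℚ) * risingQ k (i + j)) /
    ((i.factorial : ℚ) * ((j.factorial : ℚ) * risingQ k j))

lemma wQ_zero_left (k j : ℕ) (hk : 0 < k) : wQ k 0 j = 1 := by
  have h1 := factQ_ne_zero j
  have h2 := risingQ_ne_zero k j hk
  simp [wQ]
  simp_all

lemma wQ_boundary (k m : ℕ) : wQ k (m + 1) 0 = ((k : ℚ) + m) * wQ k m 0 := by
  have h1 := factQ_ne_zero m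
  have h2 : ((m + 1 : ℕ) : ℚ) ≠ 0 := by positivity
  simp only [wQ, Nat.add_zero, Nat.factorial_succ, risingQ_succ, risingQ_zero, Nat.factorial_zero]
  push_cast
  field_simp

lemma wQ_main (k i j : ℕ) (hk : 0 < k) :
    wQ k (i + 1) (j + 1) = wQ k (i + 1) j + ((k : ℚ) + i + 2 * j + 2) * wQ k i (j + 1) := by
  have hfi := factQ_ne_zero i
  have hfj := factQ_ne_zero j
  have hfij := factQ_ne_zero (i + j)
  have hrj := risingQ_ne_zero k j hk
  have hrij := risingQ_ne_zero k (i + j) hk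
  have e1 : i + 1 + (j + 1) = i + j + 1 + 1 := by ring
  have e2 : i + 1 + j = i + j + 1 := by ring
  have e3 : i + (j + 1) = i + j + 1 := by ring
  simp only [wQ, e1, e2, e3, Nat.factorial_succ, risingQ_succ]
  push_cast
  have hki : (0:ℚ) < (k:ℚ) + j := by
    have : (1 : ℚ) ≤ (k : ℚ) := by exact_mod_cast hk
    positivity
  field_simp
  ring

lemma wQ_e4 (k i j : ℕ) (hk : 0 < k) :
    ((i : ℚ) + 1) * wQ k (i + 1) j = ((i : ℚ) + j + 1) * ((i : ℚ) + j + k) * wQ k i j := by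
  have hfi := factQ_ne_zero i
  have hfj := factQ_ne_zero j
  have hfij := factQ_ne_zero (i + j)
  have hrj := risingQ_ne_zero k j hk
  have hrij := risingQ_ne_zero k (i + j) hk
  have e2 : i + 1 + j = i + j + 1 := by ring
  simp only [wQ, e2, Nat.factorial_succ, risingQ_succ]
  push_cast
  field_simp
  ring

section Main

variable {R : Type*} [CommRing R] [Algebra ℚ R]

/-- The explicit sum that should equal the higher Serre derivative. -/
def serreSum (D : Derivation ℚ R R) (e2 : R) (k : ℕ) (a : R) (m : ℕ) : R :=
  ∑ p ∈ antidiagonal m, wQ k p.1 p.2 • (((-((1 : ℚ) / 12)) • e2) ^ p.1 * (⇑D)^[p.2] a)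

lemma sum_rec (D : Derivation ℚ R R) (e2 e4 : R)
    (hRam : D e2 = ((1 : ℚ) / 12) • (e2 ^ 2 - e4)) (k : ℕ) (hk : 0 < k) (a : R) (n : ℕ) :
    serreSum D e2 k a (n + 2) =
      (D (serreSum D e2 k a (n + 1)) -
          (((k : ℚ) + 2 * ((n : ℚ) + 1)) / 12) • (e2 * serreSum D e2 k a (n + 1))) -
        ((((n : ℚ) + 1) * (((n : ℚ) + 1) + (k : ℚ) - 1) / 144) : ℚ) •
          (e4 * serreSum D e2 k a n) := by
  rw [serreSum, serreSum, serreSum, map_sum, Finset.mul_sum, Finset.smul_sum,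
    Finset.mul_sum, Finset.smul_sum, ← Finset.sum_sub_distrib]
  set E : R := (-((1 : ℚ) / 12)) • e2 with hE
  have hDE : D E = ((1 : ℚ) / 144) • e4 - E ^ 2 := by
    rw [hE, Derivation.map_smul, hRam, smul_smul, smul_sub]
    have : E ^ 2 = ((1 : ℚ) / 144) • e2 ^ 2 := by
      rw [hE, smul_pow]; norm_num
    rw [this]
    norm_num
    module
  have he2 : e2 = (-12 : ℚ) • E := by rw [hE, smul_smul]; norm_num
  -- expand each term of the first sum
  have expand : ∀ p ∈ antidiagonal (n + 1),
      D (wQ k p.1 p.2 • (E ^ p.1 * (⇑D)^[p.2] a)) -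
        (((k : ℚ) + 2 * ((n : ℚ) + 1)) / 12) • (e2 * wQ k p.1 p.2 • (E ^ p.1 * (⇑D)^[p.2] a))
      = wQ k p.1 p.2 • (E ^ p.1 * (⇑D)^[p.2 + 1] a)
        + ((p.1 : ℚ) * wQ k p.1 p.2 * (1 / 144)) • (e4 * (E ^ (p.1 - 1) * (⇑D)^[p.2] a))
        + ((((k : ℚ) + 2 * n + 2) - p.1) * wQ k p.1 p.2) • (E ^ (p.1 + 1) * (⇑D)^[p.2] a) := by
    rintro ⟨i, j⟩ -
    simp only
    have hDpow : D (E ^ i) = (i : ℚ) • (E ^ (i - 1) * (((1 : ℚ) / 144) • e4 - E ^ 2)) := by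
      rw [Derivation.leibniz_pow, smul_eq_mul, Nat.cast_smul_eq_nsmul, hDE]
    have hiter : D ((⇑D)^[j] a) = (⇑D)^[j + 1] a :=
      (Function.iterate_succ_apply' (⇑D) j a).symm
    rw [Derivation.map_smul, Derivation.leibniz, smul_eq_mul, smul_eq_mul, hDpow, hiter, he2]
    cases i with
    | zero =>
      simp only [Nat.zero_sub, Nat.cast_zero, pow_zero, pow_one, one_mul, zero_mul, zero_smul,
        smul_zero, mul_zero, add_zero, zero_add]
      simp only [smul_smul, smul_sub, mul_sub, mul_smul_comm, smul_mul_assoc]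
      ring_nf
      match_scalars <;> ring
    | succ i =>
      simp only [Nat.succ_sub_one, Nat.cast_succ]
      simp only [smul_smul, smul_sub, mul_sub, mul_smul_comm, smul_mul_assoc]
      ring_nf
      match_scalars <;> ring
  rw [Finset.sum_congr rfl expand]
  simp only [Finset.sum_add_distrib]
  -- now reindex each sum
  rw [Finset.Nat.sum_antidiagonal_succ
      (f := fun p => wQ k p.1 p.2 • (E ^ p.1 * (⇑D)^[p.2 + 1] a)),
    Finset.Nat.sum_antidiagonal_succ
      (f := fun p => ((p.1 : ℚ) * wQ k p.1 p.2 * (1 / 144)) •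
        (e4 * (E ^ (p.1 - 1) * (⇑D)^[p.2] a))),
    Finset.Nat.sum_antidiagonal_succ'
      (f := fun p => ((((k : ℚ) + 2 * n + 2) - p.1) * wQ k p.1 p.2) •
        (E ^ (p.1 + 1) * (⇑D)^[p.2] a))]
  -- left side: peel twice
  rw [Finset.Nat.sum_antidiagonal_succ
      (f := fun p => wQ k p.1 p.2 • (E ^ p.1 * (⇑D)^[p.2] a)),
    Finset.Nat.sum_antidiagonal_succ'
      (f := fun p => wQ k (p.1 + 1) p.2 • (E ^ (p.1 + 1) * (⇑D)^[p.2] a))]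
  simp only [Nat.cast_zero, zero_mul, zero_smul, zero_add, Nat.succ_sub_one, pow_zero, one_mul,
    Nat.cast_add, Nat.cast_one]
  -- termwise identities on antidiagonal n
  have main : ∀ p ∈ antidiagonal n,
      wQ k (p.1 + 1) (p.2 + 1) • (E ^ (p.1 + 1) * (⇑D)^[p.2 + 1] a)
      = wQ k (p.1 + 1) p.2 • (E ^ (p.1 + 1) * (⇑D)^[p.2 + 1] a)
        + (((p.1 : ℚ) + 1) * wQ k (p.1 + 1) p.2 * (1 / 144)) •
            (e4 * (E ^ p.1 * (⇑D)^[p.2] a))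
        + ((((k : ℚ) + 2 * n + 2) - p.1) * wQ k p.1 (p.2 + 1)) •
            (E ^ (p.1 + 1) * (⇑D)^[p.2 + 1] a)
        - ((((n : ℚ) + 1) * (((n : ℚ) + 1) + (k : ℚ) - 1) / 144) *
              wQ k p.1 p.2) • (e4 * (E ^ p.1 * (⇑D)^[p.2] a)) := by
    rintro ⟨i, j⟩ hij
    rw [Finset.HasAntidiagonal.mem_antidiagonal] at hij
    simp only
    have hn : (n : ℚ) = (i : ℚ) + (j : ℚ) := by exact_mod_cast hij.symm
    have h1 := wQ_main k i j hk
    have h2 := wQ_e4 k i j hk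
    rw [hn]
    match_scalars
    · linear_combination h1
    · linear_combination (-1 / 144 : ℚ) * h2
  -- Csum: push the scalar inside termwise
  have csum : ∀ p ∈ antidiagonal n,
      ((((n : ℚ) + 1) * (((n : ℚ) + 1) + (k : ℚ) - 1) / 144) : ℚ) •
          (e4 * wQ k p.1 p.2 • (E ^ p.1 * (⇑D)^[p.2] a))
      = ((((n : ℚ) + 1) * (((n : ℚ) + 1) + (k : ℚ) - 1) / 144) * wQ k p.1 p.2) •
          (e4 * (E ^ p.1 * (⇑D)^[p.2] a)) := by
    intro p _
    rw [mul_smul_comm, smul_smul]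
  rw [Finset.sum_congr rfl csum, Finset.sum_congr rfl main]
  rw [wQ_zero_left k (n + 1 + 1) hk, wQ_zero_left k (n + 1) hk]
  have hb : wQ k (n + 1 + 1) 0 = (((k : ℚ) + 2 * n + 2) - ((n : ℚ) + 1)) * wQ k (n + 1) 0 := by
    rw [wQ_boundary]; push_cast; ring
  rw [hb]
  simp only [Finset.sum_add_distrib, Finset.sum_sub_distrib]
  abel

lemma serre_eq_sum (D : Derivation ℚ R R) (e2 e4 : R)
    (hRam : D e2 = ((1 : ℚ) / 12) • (e2 ^ 2 - e4)) (k : ℕ) (hk : 0 < k) (a : R) (n : ℕ) :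
    higherSerreA (⇑D) e2 e4 (k : ℚ) a n = serreSum D e2 k a n := by
  have hw01 : wQ k 0 1 = 1 := wQ_zero_left k 1 hk
  have hw10 : wQ k 1 0 = (k : ℚ) := by
    rw [wQ_boundary k 0, wQ_zero_left k 0 hk]
    push_cast; ring
  have key : ∀ m, higherSerreA (⇑D) e2 e4 (k : ℚ) a m = serreSum D e2 k a m ∧
      higherSerreA (⇑D) e2 e4 (k : ℚ) a (m + 1) = serreSum D e2 k a (m + 1) := by
    intro m
    induction m with
    | zero =>
      constructor
      · rw [show higherSerreA (⇑D) e2 e4 (k : ℚ) a 0 = a from rfl, serreSum]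
        simp [wQ_zero_left k 0 hk]
      · rw [show higherSerreA (⇑D) e2 e4 (k : ℚ) a 1 =
            D a - ((k : ℚ) / 12) • (e2 * a) from rfl, serreSum]
        rw [Finset.Nat.sum_antidiagonal_succ]
        simp only [Finset.Nat.antidiagonal_zero, Finset.sum_singleton, hw01, hw10, one_smul,
          pow_zero, pow_one, one_mul, Function.iterate_one, Function.iterate_zero, id_eq,
          zero_add]
        simp only [smul_mul_assoc, smul_smul]
        match_scalars <;> ring
    | succ m ih =>
      refine ⟨ih.2, ?_⟩
      rw [show higherSerreA (⇑D) e2 e4 (k : ℚ) a (m + 1 + 1) =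
          (D (higherSerreA (⇑D) e2 e4 (k : ℚ) a (m + 1)) -
            (((k : ℚ) + 2 * ((m : ℚ) + 1)) / 12) •
              (e2 * higherSerreA (⇑D) e2 e4 (k : ℚ) a (m + 1))) -
          ((((m : ℚ) + 1) * (((m : ℚ) + 1) + (k : ℚ) - 1) / 144) : ℚ) •
            (e4 * higherSerreA (⇑D) e2 e4 (k : ℚ) a m) from rfl]
      rw [ih.1, ih.2, ← sum_rec D e2 e4 hRam k hk a m]
  exact (key n).1

end Main

theorem statement17 {R : Type*} [CommRing R] [Algebra ℚ R]
    (D : Derivation ℚ R R) (e2 e4 : R)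
    (hRam : D e2 = ((1 : ℚ) / 12) • (e2 ^ 2 - e4))
    (k : ℕ) (hk : 0 < k) (a : R) :
    (PowerSeries.mk fun n =>
        ((1 : ℚ) / ((n.factorial : ℚ) * risingQ k n)) • higherSerreA (⇑D) e2 e4 (k : ℚ) a n)
      = (PowerSeries.mk fun n =>
          ((1 : ℚ) / (n.factorial : ℚ)) • ((-((1 : ℚ) / 12)) • e2) ^ n) *
        (PowerSeries.mk fun n =>
          ((1 : ℚ) / ((n.factorial : ℚ) * risingQ k n)) • (⇑D)^[n] a) := by
  apply PowerSeries.ext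
  intro n
  rw [PowerSeries.coeff_mul]
  simp only [PowerSeries.coeff_mk]
  rw [serre_eq_sum D e2 e4 hRam k hk a n, serreSum, Finset.smul_sum]
  refine Finset.sum_congr rfl fun p hp => ?_
  rw [Finset.HasAntidiagonal.mem_antidiagonal] at hp
  subst hp
  rw [smul_smul, smul_mul_smul_comm]
  congr 1
  have hf1 := factQ_ne_zero p.1
  have hf2 := factQ_ne_zero p.2
  have hf12 := factQ_ne_zero (p.1 + p.2)
  have hr2 := risingQ_ne_zero k p.2 hk
  have hr12 := risingQ_ne_zero k (p.1 + p.2) hk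
  rw [wQ]
  field_simp
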